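/- Let D > 0, T > 0, let s : ℝ² × [0,∞) → [0,∞) and φ : {(τ,η) : 0 ≤ τ ≤ η} → [0,∞) be measurable, and define p(ρ,η) = ∫_0^η g_{√(2Dτ)}(ρ)·φ(τ,η) dτ and d_obs(r) = ∫_{ℝ²} ∫_0^T s(r−ρ, T−η)·p(ρ,η) dη dρ. Then for every r ∈ ℝ², d_obs(r) = ∫_0^{σ_max} (∫_{ℝ²} g_σ(r−ρ)·a(ρ,σ) dρ) dσ, where σ_max = √(2DT) and a(ρ,σ) = (σ/D)·∫_{σ²/(2D)}^T s(ρ, T−η)·φ(σ²/(2D), η) dη (equality holding in [0,∞]). -/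

import Mathlib

open Real MeasureTheory Set ENNReal

/-- The 2D rotationally invariant Gaussian kernel
`g_σ(r) = (1/(2πσ²)) exp(−‖r‖²/(2σ²))`. -/
noncomputable def gauss2D (σ : ℝ) (r : ℝ × ℝ) : ℝ :=
  (1 / (2 * π * σ ^ 2)) * Real.exp (-(r.1 ^ 2 + r.2 ^ 2) / (2 * σ ^ 2))

lemma gauss2D_nonneg (σ : ℝ) (r : ℝ × ℝ) : 0 ≤ gauss2D σ r := by
  unfold gauss2D
  have h1 : (0:ℝ) ≤ 1 / (2 * π * σ ^ 2) := by positivity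
  exact mul_nonneg h1 (Real.exp_nonneg _)

lemma gauss2D_measurable : Measurable (fun q : ℝ × (ℝ × ℝ) => gauss2D q.1 q.2) := by
  unfold gauss2D
  fun_prop

/-- One-dimensional change of variables for the Lebesgue integral. -/
lemma lintegral_image_eq_lintegral_abs_deriv_mul {s : Set ℝ} {f f' : ℝ → ℝ}
    (hs : MeasurableSet s) (hf' : ∀ x ∈ s, HasDerivWithinAt f (f' x) s x)
    (hf : InjOn f s) (g : ℝ → ℝ≥0∞) :
    ∫⁻ x in f '' s, g x = ∫⁻ x in s, ENNReal.ofReal |f' x| * g (f x) := by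
  simpa only [ContinuousLinearMap.det_toSpanSingleton] using
    MeasureTheory.lintegral_image_eq_lintegral_abs_det_fderiv_mul volume hs
      (fun x hx => (hf' x hx).hasFDerivWithinAt) hf g

/-- Substitution `τ = σ²/(2D)` in a Lebesgue integral over `(0, η]`. -/
lemma cov_sigma (D : ℝ) (hD : 0 < D) (η : ℝ) (hη : 0 < η) (h : ℝ → ℝ≥0∞) :
    ∫⁻ τ in Set.Ioc (0:ℝ) η, h τ
      = ∫⁻ σ in Set.Ioc (0:ℝ) (Real.sqrt (2*D*η)),
          ENNReal.ofReal (σ/D) * h (σ^2/(2*D)) := by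
  have h2D : (0:ℝ) < 2 * D := by linarith
  have himg : (fun σ : ℝ => σ^2/(2*D)) '' Set.Ioc 0 (Real.sqrt (2*D*η)) = Set.Ioc 0 η := by
    ext x
    constructor
    · rintro ⟨σ, ⟨hσ0, hσle⟩, rfl⟩
      refine ⟨by positivity, ?_⟩
      have h1 : σ^2 ≤ 2*D*η := by
        have := Real.sq_sqrt (le_of_lt (by positivity : (0:ℝ) < 2*D*η))
        nlinarith [pow_le_pow_left₀ hσ0.le hσle 2]
      rw [div_le_iff₀ h2D]; linarith
    · rintro ⟨hx0, hxη⟩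
      refine ⟨Real.sqrt (2*D*x), ⟨Real.sqrt_pos.mpr (by positivity),
        Real.sqrt_le_sqrt (by nlinarith)⟩, ?_⟩
      show Real.sqrt (2*D*x) ^ 2 / (2*D) = x
      rw [Real.sq_sqrt (by positivity : (0:ℝ) ≤ 2*D*x)]
      field_simp
  have hderiv : ∀ x ∈ Set.Ioc (0:ℝ) (Real.sqrt (2*D*η)),
      HasDerivWithinAt (fun σ : ℝ => σ^2/(2*D)) (x / D) (Set.Ioc 0 (Real.sqrt (2*D*η))) x := by
    intro x _
    have h1 : HasDerivAt (fun σ : ℝ => σ^2/(2*D)) ((2 * x ^ 1)/(2*D)) x :=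
      (hasDerivAt_pow 2 x).div_const (2*D)
    have h2 : (2 * x ^ 1)/(2*D) = x / D := by
      field_simp
    exact (h2 ▸ h1).hasDerivWithinAt
  have hinj : Set.InjOn (fun σ : ℝ => σ^2/(2*D)) (Set.Ioc 0 (Real.sqrt (2*D*η))) := by
    intro a ha b hb hab
    have hab' : a^2 = b^2 := by
      field_simp at hab; linarith
    calc a = Real.sqrt (a^2) := (Real.sqrt_sq ha.1.le).symm
      _ = Real.sqrt (b^2) := by rw [hab']
      _ = b := Real.sqrt_sq hb.1.le
  rw [← himg, _root_.lintegral_image_eq_lintegral_abs_deriv_mul measurableSet_Ioc hderiv hinj h]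
  refine setLIntegral_congr_fun measurableSet_Ioc (fun σ hσ => ?_)
  rw [abs_of_pos (div_pos hσ.1 hD)]

/-- The region swap equivalence. -/
lemma region_iff {D T : ℝ} (hD : 0 < D) (η σ : ℝ) :
    (η ∈ Set.Ioc (0:ℝ) T ∧ σ ∈ Set.Ioo 0 (Real.sqrt (2*D*η))) ↔
    (σ ∈ Set.Ioo (0:ℝ) (Real.sqrt (2*D*T)) ∧ η ∈ Set.Ioc (σ^2/(2*D)) T) := by
  have h2D : (0:ℝ) < 2 * D := by linarith
  constructor
  · rintro ⟨⟨hη0, hηT⟩, hσ0, hσlt⟩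
    have hσ2 : σ^2 < 2*D*η := (Real.lt_sqrt hσ0.le).mp hσlt
    refine ⟨⟨hσ0, (Real.lt_sqrt hσ0.le).mpr (by nlinarith)⟩,
      ⟨by rw [div_lt_iff₀ h2D]; nlinarith, hηT⟩⟩
  · rintro ⟨⟨hσ0, hσlt⟩, ⟨hηgt, hηT⟩⟩
    rw [div_lt_iff₀ h2D] at hηgt
    have hη0 : 0 < η := by nlinarith
    exact ⟨⟨hη0, hηT⟩, hσ0, (Real.lt_sqrt hσ0.le).mpr (by nlinarith)⟩

/-- Representation of an iterated set integral with dependent inner set as a double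
integral of an indicator. -/
lemma setLIntegral_dep {U : Set ℝ} (hU : MeasurableSet U) {V : ℝ → Set ℝ}
    (hV : ∀ x, MeasurableSet (V x)) (f : ℝ → ℝ → ℝ≥0∞) :
    ∫⁻ x in U, ∫⁻ y in V x, f x y =
      ∫⁻ x, ∫⁻ y, ({q : ℝ × ℝ | q.1 ∈ U ∧ q.2 ∈ V q.1}).indicator
        (fun q => f q.1 q.2) (x, y) := by
  rw [← lintegral_indicator hU]
  congr 1; funext x
  by_cases hx : x ∈ U
  · rw [Set.indicator_of_mem hx, ← lintegral_indicator (hV x)]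
    congr 1; funext y
    by_cases hy : y ∈ V x <;> simp [Set.indicator_apply, hx, hy]
  · rw [Set.indicator_of_notMem hx]
    symm
    simp [Set.indicator_apply, hx]

/-- The integrand after the change of variables. -/
noncomputable def Fker (D T : ℝ) (s : ℝ × ℝ → ℝ → ℝ) (φ : ℝ → ℝ → ℝ)
    (r ρ : ℝ × ℝ) (σ η : ℝ) : ℝ≥0∞ :=
  ENNReal.ofReal (s ρ (T - η)) *
    (ENNReal.ofReal (σ / D) *
      ENNReal.ofReal (gauss2D σ (r - ρ) * φ (σ ^ 2 / (2 * D)) η))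

lemma Fker_measurable (D T : ℝ) (s : ℝ × ℝ → ℝ → ℝ) (φ : ℝ → ℝ → ℝ)
    (hs_meas : Measurable (Function.uncurry s)) (hφ_meas : Measurable (Function.uncurry φ))
    (r : ℝ × ℝ) :
    Measurable (fun q : (ℝ × ℝ) × ℝ × ℝ => Fker D T s φ r q.1 q.2.1 q.2.2) := by
  unfold Fker
  have m1 : Measurable (fun q : (ℝ × ℝ) × ℝ × ℝ => s q.1 (T - q.2.2)) :=
    hs_meas.comp (measurable_fst.prodMk (measurable_const.sub measurable_snd.snd))
  have m2 : Measurable (fun q : (ℝ × ℝ) × ℝ × ℝ => q.2.1 / D) :=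
    measurable_snd.fst.div measurable_const
  have m3 : Measurable (fun q : (ℝ × ℝ) × ℝ × ℝ => gauss2D q.2.1 (r - q.1)) := by
    unfold gauss2D; fun_prop
  have m4 : Measurable (fun q : (ℝ × ℝ) × ℝ × ℝ => φ (q.2.1 ^ 2 / (2 * D)) q.2.2) :=
    hφ_meas.comp
      (((measurable_snd.fst.pow_const 2).div measurable_const).prodMk measurable_snd.snd)
  exact m1.ennreal_ofReal.mul (m2.ennreal_ofReal.mul (m3.mul m4).ennreal_ofReal)

/-- Observation model: the density `d_obs` of bound particles at imaging time
`T`, given by the spatio-temporal convolution of the source density rate `s` with the Green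
function `p(ρ,η) = ∫_0^η g_{√(2Dτ)}(ρ) φ(τ,η) dτ`, satisfies
`d_obs(r) = ∫_0^{σ_max} (G_σ a(·,σ))(r) dσ` with `σ_max = √(2DT)` and PSDR
`a(ρ,σ) = (σ/D) ∫_{σ²/(2D)}^T s(ρ, T−η) φ(σ²/(2D), η) dη`, with equality in `[0,∞]`. -/
theorem observation_model (D T : ℝ) (hD : 0 < D) (hT : 0 < T)
    (s : ℝ × ℝ → ℝ → ℝ) (φ : ℝ → ℝ → ℝ)
    (hs_meas : Measurable (Function.uncurry s)) (hφ_meas : Measurable (Function.uncurry φ))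
    (hs_nonneg : ∀ ρ t, 0 ≤ s ρ t) (hφ_nonneg : ∀ τ η, 0 ≤ φ τ η)
    -- the Green function of the surface density
    (p : ℝ × ℝ → ℝ → ℝ≥0∞)
    (hp : ∀ ρ η, p ρ η = ∫⁻ τ in Set.Ioc (0 : ℝ) η,
        ENNReal.ofReal (gauss2D (Real.sqrt (2 * D * τ)) ρ * φ τ η))
    -- the observed density of bound particles at time `T`
    (dObs : ℝ × ℝ → ℝ≥0∞)
    (hdObs : ∀ r, dObs r = ∫⁻ ρ : ℝ × ℝ, ∫⁻ η in Set.Ioc (0 : ℝ) T,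
        ENNReal.ofReal (s (r - ρ) (T - η)) * p ρ η)
    -- the post adsorption-desorption source density rate (PSDR)
    (a : ℝ × ℝ → ℝ → ℝ≥0∞)
    (ha : ∀ ρ σ, a ρ σ = ENNReal.ofReal (σ / D) *
        ∫⁻ η in Set.Ioc (σ ^ 2 / (2 * D)) T,
          ENNReal.ofReal (s ρ (T - η) * φ (σ ^ 2 / (2 * D)) η))
    (r : ℝ × ℝ) :
    dObs r =
      ∫⁻ σ in Set.Ioc (0 : ℝ) (Real.sqrt (2 * D * T)), ∫⁻ ρ : ℝ × ℝ,
        ENNReal.ofReal (gauss2D σ (r - ρ)) * a ρ σ := by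
  have h2D : (0:ℝ) < 2 * D := by linarith
  set F : (ℝ × ℝ) → ℝ → ℝ → ℝ≥0∞ := Fker D T s φ r with hF_def
  have hF : Measurable (fun q : (ℝ × ℝ) × ℝ × ℝ => F q.1 q.2.1 q.2.2) :=
    Fker_measurable D T s φ hs_meas hφ_meas r
  -- Step 0: reflection ρ ↦ r - ρ
  have step0 : dObs r = ∫⁻ ρ : ℝ × ℝ, ∫⁻ η in Set.Ioc (0 : ℝ) T,
      ENNReal.ofReal (s ρ (T - η)) * p (r - ρ) η := by
    rw [hdObs r]
    have key := (MeasureTheory.Measure.measurePreserving_sub_left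
        (volume : Measure (ℝ × ℝ)) r).lintegral_comp_emb
        (MeasurableEquiv.subLeft r).measurableEmbedding
        (fun ρ => ∫⁻ η in Set.Ioc (0 : ℝ) T,
          ENNReal.ofReal (s ρ (T - η)) * p (r - ρ) η)
    rw [← key]
    refine lintegral_congr fun ρ => ?_
    simp [_root_.sub_sub_cancel]
  rw [step0]
  -- Step 1: change of variables in the inner integral
  have step1 : ∀ ρ : ℝ × ℝ, (∫⁻ η in Set.Ioc (0 : ℝ) T,
        ENNReal.ofReal (s ρ (T - η)) * p (r - ρ) η)
      = ∫⁻ η in Set.Ioc (0 : ℝ) T,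
          ∫⁻ σ in Set.Ioo (0:ℝ) (Real.sqrt (2*D*η)), F ρ σ η := by
    intro ρ
    refine setLIntegral_congr_fun measurableSet_Ioc (fun η hη => ?_)
    rw [hp, cov_sigma D hD η hη.1,
      ← setLIntegral_congr (Ioo_ae_eq_Ioc
        (a := (0:ℝ)) (b := Real.sqrt (2*D*η)) (μ := volume)),
      ← lintegral_const_mul' _ _ ENNReal.ofReal_ne_top]
    refine setLIntegral_congr_fun measurableSet_Ioo (fun σ hσ => ?_)
    have h1 : 2 * D * (σ ^ 2 / (2 * D)) = σ ^ 2 := by field_simp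
    rw [hF_def]
    unfold Fker
    rw [h1, Real.sqrt_sq hσ.1.le]
  simp_rw [step1]
  -- Step 2: swap η and σ
  have hMη : ∀ η : ℝ, MeasurableSet (Set.Ioo (0:ℝ) (Real.sqrt (2*D*η))) :=
    fun _ => measurableSet_Ioo
  have step2 : ∀ ρ : ℝ × ℝ, (∫⁻ η in Set.Ioc (0 : ℝ) T,
        ∫⁻ σ in Set.Ioo (0:ℝ) (Real.sqrt (2*D*η)), F ρ σ η)
      = ∫⁻ σ in Set.Ioo (0:ℝ) (Real.sqrt (2*D*T)),
          ∫⁻ η in Set.Ioc (σ^2/(2*D)) T, F ρ σ η := by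
    intro ρ
    have hmρ : Measurable (fun q : ℝ × ℝ => F ρ q.2 q.1) :=
      hF.comp ((measurable_const.prodMk (measurable_snd.prodMk measurable_fst)))
    have hS1 : MeasurableSet {q : ℝ × ℝ | q.1 ∈ Set.Ioc (0:ℝ) T ∧
        q.2 ∈ Set.Ioo 0 (Real.sqrt (2*D*q.1))} := by
      have e : {q : ℝ × ℝ | q.1 ∈ Set.Ioc (0:ℝ) T ∧
          q.2 ∈ Set.Ioo 0 (Real.sqrt (2*D*q.1))}
          = ((fun q : ℝ × ℝ => q.1) ⁻¹' Set.Ioc (0:ℝ) T) ∩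
            ({q : ℝ × ℝ | 0 < q.2} ∩ {q : ℝ × ℝ | q.2 < Real.sqrt (2*D*q.1)}) := by
        ext q; simp [Set.mem_Ioo, and_assoc]
      rw [e]
      refine (measurable_fst measurableSet_Ioc).inter
        ((measurableSet_lt measurable_const measurable_snd).inter
          (measurableSet_lt measurable_snd
            (Real.continuous_sqrt.measurable.comp (measurable_const.mul measurable_fst))))
    rw [setLIntegral_dep measurableSet_Ioc hMη (fun η σ => F ρ σ η),
      setLIntegral_dep measurableSet_Ioo (fun _ => measurableSet_Ioc)
        (fun σ η => F ρ σ η)]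
    refine Eq.trans (lintegral_lintegral_swap (f := fun η σ =>
      ({q : ℝ × ℝ | q.1 ∈ Set.Ioc (0:ℝ) T ∧
        q.2 ∈ Set.Ioo 0 (Real.sqrt (2*D*q.1))}).indicator
          (fun q => F ρ q.2 q.1) (η, σ)) (by
        apply Measurable.aemeasurable
        exact (hmρ.indicator hS1).comp (measurable_fst.prodMk measurable_snd))) ?_
    refine lintegral_congr fun σ => lintegral_congr fun η => ?_
    simp only [Set.indicator_apply, Set.mem_setOf_eq]
    exact if_congr (region_iff hD η σ) rfl rfl
  simp_rw [step2]
  -- Step 3: swap ρ and σ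
  have hK : Measurable (fun q : (ℝ × ℝ) × ℝ =>
      ∫⁻ η in Set.Ioc (q.2^2/(2*D)) T, F q.1 q.2 η) := by
    have hrw : ∀ q : (ℝ × ℝ) × ℝ, (∫⁻ η in Set.Ioc (q.2^2/(2*D)) T, F q.1 q.2 η)
        = ∫⁻ η, (Set.Ioc (q.2^2/(2*D)) T).indicator (F q.1 q.2) η := by
      intro q; rw [lintegral_indicator measurableSet_Ioc]
    simp_rw [hrw]
    apply Measurable.lintegral_prod_right (f := fun (q : (ℝ × ℝ) × ℝ) (η : ℝ) =>
      (Set.Ioc (q.2^2/(2*D)) T).indicator (F q.1 q.2) η)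
    have hSm : MeasurableSet {w : ((ℝ × ℝ) × ℝ) × ℝ |
        w.2 ∈ Set.Ioc (w.1.2^2/(2*D)) T} := by
      have e : {w : ((ℝ × ℝ) × ℝ) × ℝ | w.2 ∈ Set.Ioc (w.1.2^2/(2*D)) T}
          = {w : ((ℝ × ℝ) × ℝ) × ℝ | w.1.2^2/(2*D) < w.2} ∩
            {w : ((ℝ × ℝ) × ℝ) × ℝ | w.2 ≤ T} := by
        ext w; simp [Set.mem_Ioc]
      rw [e]
      exact (measurableSet_lt (((measurable_fst.snd).pow_const 2).div measurable_const)
        measurable_snd).inter (measurableSet_le measurable_snd measurable_const)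
    have hFm : Measurable (fun w : ((ℝ × ℝ) × ℝ) × ℝ => F w.1.1 w.1.2 w.2) :=
      hF.comp ((measurable_fst.fst).prodMk ((measurable_fst.snd).prodMk measurable_snd))
    have e2 : (Function.uncurry (fun (q : (ℝ × ℝ) × ℝ) (η : ℝ) =>
        (Set.Ioc (q.2^2/(2*D)) T).indicator (F q.1 q.2) η))
        = {w : ((ℝ × ℝ) × ℝ) × ℝ | w.2 ∈ Set.Ioc (w.1.2^2/(2*D)) T}.indicator
            (fun w => F w.1.1 w.1.2 w.2) := by
      funext w
      simp [Function.uncurry, Set.indicator_apply]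
    rw [e2]
    exact hFm.indicator hSm
  have step3 : (∫⁻ ρ : ℝ × ℝ, ∫⁻ σ in Set.Ioo (0:ℝ) (Real.sqrt (2*D*T)),
        ∫⁻ η in Set.Ioc (σ^2/(2*D)) T, F ρ σ η)
      = ∫⁻ σ in Set.Ioo (0:ℝ) (Real.sqrt (2*D*T)), ∫⁻ ρ : ℝ × ℝ,
          ∫⁻ η in Set.Ioc (σ^2/(2*D)) T, F ρ σ η :=
    lintegral_lintegral_swap hK.aemeasurable
  rw [step3]
  -- Step 4: identify with the PSDR convolution
  rw [setLIntegral_congr (Ioo_ae_eq_Ioc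
    (a := (0:ℝ)) (b := Real.sqrt (2*D*T)) (μ := volume))]
  refine setLIntegral_congr_fun measurableSet_Ioc (fun σ hσ => ?_)
  refine lintegral_congr fun ρ => ?_
  rw [ha]
  have hrw : ∀ η : ℝ, F ρ σ η
      = (ENNReal.ofReal (gauss2D σ (r - ρ)) * ENNReal.ofReal (σ / D)) *
          ENNReal.ofReal (s ρ (T - η) * φ (σ ^ 2 / (2 * D)) η) := by
    intro η
    rw [hF_def]
    unfold Fker
    rw [ENNReal.ofReal_mul (gauss2D_nonneg _ _), ENNReal.ofReal_mul (hs_nonneg _ _)]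
    ring
  simp_rw [hrw]
  rw [lintegral_const_mul' _ _
    (ENNReal.mul_ne_top ENNReal.ofReal_ne_top ENNReal.ofReal_ne_top)]
  ring
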